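/- Let $1 \le m \le n$ and $\Lambda_1 \ge \Lambda_2 \ge \cdots \ge \Lambda_n$ be a vector in $\Gamma_m$. Then the smallest partial derivative of $\sigma_m$ satisfies $\sigma_{m-1}(\Lambda | 1) \ge \frac{m}{n \Lambda_1}\, \sigma_m(\Lambda)$, where $\sigma_{m-1}(\Lambda|1)$ denotes $\sigma_{m-1}$ of the vector $\Lambda$ with the first entry removed. -/

import Mathlib

open Finset

/-- The `k`-th elementary symmetric polynomial of `lam : Fin n → ℝ`. -/
noncomputable def esymmR (n k : ℕ) (lam : Fin n → ℝ) : ℝ :=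
  ∑ s ∈ Finset.powersetCard k (Finset.univ : Finset (Fin n)), ∏ i ∈ s, lam i

/-- The `(m-1)`-th elementary symmetric polynomial of `lam` with the entry `i₀` removed. -/
noncomputable def esymmRemove (n k : ℕ) (i₀ : Fin n) (lam : Fin n → ℝ) : ℝ :=
  ∑ s ∈ Finset.powersetCard k ((Finset.univ : Finset (Fin n)).erase i₀), ∏ i ∈ s, lam i

open Polynomial

variable {n : ℕ}

/-- esymm over a finset of indices -/
noncomputable def esymmA (lam : Fin n → ℝ) (A : Finset (Fin n)) (k : ℕ) : ℝ :=
  ∑ s ∈ A.powersetCard k, ∏ i ∈ s, lam i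

lemma esymmA_zero (lam : Fin n → ℝ) (A : Finset (Fin n)) : esymmA lam A 0 = 1 := by
  simp [esymmA]

lemma esymmA_of_card_lt (lam : Fin n → ℝ) {A : Finset (Fin n)} {k : ℕ} (h : A.card < k) :
    esymmA lam A k = 0 := by
  rw [esymmA, Finset.powersetCard_eq_empty.2 h, Finset.sum_empty]

lemma powersetCard_erase_eq_filter (A : Finset (Fin n)) (i : Fin n) (k : ℕ) :
    (A.erase i).powersetCard k = (A.powersetCard k).filter (fun s => i ∉ s) := by
  ext s
  simp only [mem_powersetCard, mem_filter, subset_erase]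
  tauto

/-- I1 -/
lemma esymmA_erase (lam : Fin n → ℝ) {A : Finset (Fin n)} {i : Fin n} (hi : i ∈ A) (k : ℕ) :
    esymmA lam A (k + 1)
      = esymmA lam (A.erase i) (k + 1) + lam i * esymmA lam (A.erase i) k := by
  classical
  have hsplit : esymmA lam A (k+1)
      = (∑ s ∈ (A.powersetCard (k+1)).filter (fun s => i ∉ s), ∏ j ∈ s, lam j)
        + ∑ s ∈ (A.powersetCard (k+1)).filter (fun s => i ∈ s), ∏ j ∈ s, lam j := by
    rw [esymmA, ← Finset.sum_filter_add_sum_filter_not (A.powersetCard (k+1)) (fun s => i ∈ s)]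
    ring
  rw [hsplit]
  congr 1
  · rw [esymmA, powersetCard_erase_eq_filter]
  · rw [esymmA, Finset.mul_sum]
    refine Finset.sum_nbij' (fun s => s.erase i) (fun t => insert i t) ?_ ?_ ?_ ?_ ?_
    · intro s hs
      simp only [mem_filter, mem_powersetCard] at hs
      simp only [mem_powersetCard]
      constructor
      · exact fun x hx => Finset.mem_erase.2 ⟨(Finset.mem_erase.1 hx).1,
          hs.1.1 (Finset.mem_erase.1 hx).2⟩
      · rw [Finset.card_erase_of_mem hs.2, hs.1.2]; rfl
    · intro t ht
      simp only [mem_powersetCard, subset_erase] at ht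
      simp only [mem_filter, mem_powersetCard]
      refine ⟨⟨Finset.insert_subset hi ht.1.1, ?_⟩, Finset.mem_insert_self i t⟩
      rw [Finset.card_insert_of_notMem ht.1.2, ht.2]
    · intro s hs
      simp only [mem_filter] at hs
      exact Finset.insert_erase hs.2
    · intro t ht
      simp only [mem_powersetCard, subset_erase] at ht
      exact Finset.erase_insert ht.1.2
    · intro s hs
      simp only [mem_filter] at hs
      exact (Finset.mul_prod_erase s lam hs.2).symm

/-- I3 -/
lemma sum_esymmA_erase (lam : Fin n → ℝ) (A : Finset (Fin n)) (k : ℕ) :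
    ∑ i ∈ A, esymmA lam (A.erase i) k = ((A.card - k : ℕ) : ℝ) * esymmA lam A k := by
  classical
  rcases lt_or_ge A.card k with h | h
  · rw [esymmA_of_card_lt lam h, Nat.sub_eq_zero_of_le h.le]
    simp only [Nat.cast_zero, zero_mul]
    refine Finset.sum_eq_zero fun i hi => esymmA_of_card_lt lam ?_
    calc (A.erase i).card ≤ A.card := Finset.card_erase_le
    _ < k := h
  · have h1 : ∀ i ∈ A, esymmA lam (A.erase i) k
        = ∑ s ∈ A.powersetCard k, (if i ∉ s then (∏ j ∈ s, lam j) else 0) := by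
      intro i _
      rw [esymmA, powersetCard_erase_eq_filter, Finset.sum_filter]
    rw [Finset.sum_congr rfl h1, Finset.sum_comm]
    have h2 : ∀ s ∈ A.powersetCard k,
        (∑ i ∈ A, if i ∉ s then (∏ j ∈ s, lam j) else 0)
          = ((A.card - k : ℕ) : ℝ) * ∏ j ∈ s, lam j := by
      intro s hs
      rw [mem_powersetCard] at hs
      have h3 : (∑ i ∈ A, if i ∉ s then (∏ j ∈ s, lam j) else 0)
          = ((A.filter (fun i => i ∉ s)).card : ℝ) * ∏ j ∈ s, lam j := by
        rw [Finset.sum_ite, Finset.sum_const_zero, add_zero, Finset.sum_const, nsmul_eq_mul]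
      rw [h3, ← Finset.sdiff_eq_filter, Finset.card_sdiff_of_subset hs.1, hs.2]
    rw [Finset.sum_congr rfl h2, ← Finset.mul_sum, esymmA]

/-- I2 -/
lemma sum_lam_esymmA_erase (lam : Fin n → ℝ) (A : Finset (Fin n)) (k : ℕ) :
    ∑ i ∈ A, lam i * esymmA lam (A.erase i) k = ((k+1 : ℕ) : ℝ) * esymmA lam A (k+1) := by
  classical
  have hterm : ∀ i ∈ A, lam i * esymmA lam (A.erase i) k
      = esymmA lam A (k+1) - esymmA lam (A.erase i) (k+1) := by
    intro i hi
    rw [esymmA_erase lam hi k]; ring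
  rw [Finset.sum_congr rfl hterm, Finset.sum_sub_distrib, sum_esymmA_erase,
    Finset.sum_const, nsmul_eq_mul]
  rcases le_or_gt (k+1) A.card with h | h
  · have : ((A.card - (k+1) : ℕ) : ℝ) = (A.card : ℝ) - ((k+1 : ℕ) : ℝ) := by
      push_cast [h]; ring
    rw [this]; push_cast; ring
  · rw [esymmA_of_card_lt lam h]; ring

lemma esymmA_self (lam : Fin n → ℝ) (B : Finset (Fin n)) :
    esymmA lam B B.card = ∏ i ∈ B, lam i := by
  rw [esymmA, Finset.powersetCard_self, Finset.sum_singleton]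

lemma esymmA_pred (lam : Fin n → ℝ) {A : Finset (Fin n)} (hA : A.Nonempty) :
    esymmA lam A (A.card - 1) = ∑ i ∈ A, ∏ j ∈ A.erase i, lam j := by
  have h := sum_esymmA_erase lam A (A.card - 1)
  have hc : ∀ i ∈ A, esymmA lam (A.erase i) (A.card - 1) = ∏ j ∈ A.erase i, lam j := by
    intro i hi
    rw [← Finset.card_erase_of_mem hi, esymmA_self]
  rw [Finset.sum_congr rfl hc] at h
  have h1 : 1 ≤ A.card := Finset.card_pos.2 hA
  have : A.card - (A.card - 1) = 1 := by omega
  rw [this] at h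
  simpa using h.symm

/-- Descartes: if all esymm up to the cardinality are positive, all entries are positive -/
lemma all_pos_of_gamma_card (lam : Fin n → ℝ) {A : Finset (Fin n)}
    (hpos : ∀ k, 1 ≤ k → k ≤ A.card → 0 < esymmA lam A k) :
    ∀ j ∈ A, 0 < lam j := by
  classical
  intro j hj
  by_contra hneg
  push_neg at hneg
  set c : ℝ := -lam j with hc
  have hc0 : 0 ≤ c := by simp [hc]; linarith
  have hprod : ∏ i ∈ A, (lam i + c) = 0 :=
    Finset.prod_eq_zero hj (by simp [hc])
  have hexp : ∏ i ∈ A, (lam i + c)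
      = ∑ k ∈ Finset.range (A.card + 1), esymmA lam A k * c ^ (A.card - k) := by
    rw [Finset.prod_add, Finset.powerset_card_disjiUnion]
    erw [Finset.sum_disjiUnion]
    refine Finset.sum_congr rfl fun k hk => ?_
    rw [esymmA, Finset.sum_mul]
    refine Finset.sum_congr rfl fun s hs => ?_
    rw [mem_powersetCard] at hs
    rw [Finset.prod_const, Finset.card_sdiff_of_subset hs.1, hs.2]
  have hge : ∀ k ∈ Finset.range (A.card + 1), 0 ≤ esymmA lam A k * c ^ (A.card - k) := by
    intro k hk
    rw [Finset.mem_range, Nat.lt_succ_iff] at hk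
    rcases Nat.eq_zero_or_pos k with rfl | hk1
    · rw [esymmA_zero]; positivity
    · exact mul_nonneg (hpos k hk1 hk).le (by positivity)
  have hcard : 1 ≤ A.card := Finset.card_pos.2 ⟨j, hj⟩
  have hmem : A.card ∈ Finset.range (A.card + 1) := by simp
  have hgt : 0 < ∑ k ∈ Finset.range (A.card + 1), esymmA lam A k * c ^ (A.card - k) := by
    refine Finset.sum_pos' hge ⟨A.card, hmem, ?_⟩
    simpa using (hpos A.card hcard le_rfl)
  rw [hexp] at hprod
  linarith

/-- Newton's inequality, top case `N = k+1`, in function form over `univ`. -/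
lemma newton_top (M : ℕ) (hM : 2 ≤ M) (f : Fin M → ℝ) :
    esymmA f univ (M-2) * esymmA f univ M * ((M : ℝ))^2
      ≤ (esymmA f univ (M-1))^2 * (M.choose (M-2) : ℝ) := by
  classical
  have hcard : (univ : Finset (Fin M)).card = M := by simp
  have hne : (univ : Finset (Fin M)).Nonempty := by
    rw [← Finset.card_pos, hcard]; omega
  set P : Fin M → ℝ := fun i => ∏ j ∈ (univ : Finset (Fin M)).erase i, f j with hP
  have hsig1 : esymmA f univ (M-1) = ∑ i, P i := by
    have h := esymmA_pred f hne
    rw [hcard] at h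
    exact h
  have hsigM : esymmA f univ M = ∏ j, f j := by
    have h := esymmA_self f (univ : Finset (Fin M))
    rw [hcard] at h
    exact h
  have hfP : ∀ i, f i * P i = esymmA f univ M := by
    intro i; rw [hsigM, hP]; exact Finset.mul_prod_erase univ f (mem_univ i)
  have hpair : ∀ i : Fin M, ∀ j ∈ (univ : Finset (Fin M)).erase i,
      P i * P j = esymmA f univ M * ∏ l ∈ ((univ : Finset (Fin M)).erase i).erase j, f l := by
    intro i j hj
    have hij : i ≠ j := fun h => by simp [← h] at hj
    have hPj : P j = f i * ∏ l ∈ ((univ : Finset (Fin M)).erase i).erase j, f l := by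
      rw [Finset.erase_right_comm]
      exact (Finset.mul_prod_erase _ f
        (Finset.mem_erase.2 ⟨hij, mem_univ i⟩ : i ∈ (univ : Finset (Fin M)).erase j)).symm
    rw [hPj, ← mul_assoc, mul_comm (P i) (f i), hfP i]
  have hinner : ∀ i : Fin M,
      ∑ j ∈ (univ : Finset (Fin M)).erase i, ∏ l ∈ ((univ : Finset (Fin M)).erase i).erase j, f l
        = esymmA f (univ.erase i) (M-2) := by
    intro i
    have hce : ((univ : Finset (Fin M)).erase i).card = M - 1 := by
      rw [Finset.card_erase_of_mem (mem_univ i), hcard]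
    have hne' : ((univ : Finset (Fin M)).erase i).Nonempty := by
      rw [← Finset.card_pos, hce]; omega
    have := esymmA_pred f hne'
    rw [hce] at this
    have h2 : M - 1 - 1 = M - 2 := by omega
    rw [h2] at this
    exact this.symm
  have hsum2 : ∑ i, esymmA f (univ.erase i) (M-2) = 2 * esymmA f univ (M-2) := by
    rw [sum_esymmA_erase, hcard]
    congr 1
    have : M - (M - 2) = 2 := by omega
    rw [this]; norm_num
  have key : 2 * (esymmA f univ M * esymmA f univ (M-2))
      = (esymmA f univ (M-1))^2 - ∑ i, (P i)^2 := by
    have lhs1 : ∑ i, ∑ j ∈ (univ : Finset (Fin M)).erase i, P i * P j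
        = esymmA f univ M * (2 * esymmA f univ (M-2)) := by
      rw [← hsum2, Finset.mul_sum]
      refine Finset.sum_congr rfl fun i _ => ?_
      rw [Finset.sum_congr rfl (hpair i), ← Finset.mul_sum, hinner i]
    have lhs2 : ∑ i, ∑ j ∈ (univ : Finset (Fin M)).erase i, P i * P j
        = (esymmA f univ (M-1))^2 - ∑ i, (P i)^2 := by
      have : ∀ i : Fin M, ∑ j ∈ (univ : Finset (Fin M)).erase i, P i * P j
          = P i * (esymmA f univ (M-1)) - (P i)^2 := by
        intro i
        rw [← Finset.mul_sum, Finset.sum_erase_eq_sub (mem_univ i), ← hsig1]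
        ring
      rw [Finset.sum_congr rfl (fun i _ => this i), Finset.sum_sub_distrib, ← Finset.sum_mul,
        ← hsig1]
      ring
    linarith [lhs1.symm.trans lhs2]
  have hCS : (∑ i, P i)^2 ≤ (M : ℝ) * ∑ i, (P i)^2 := by
    have := sq_sum_le_card_mul_sum_sq (s := (univ : Finset (Fin M))) (f := P)
    simpa [hcard] using this
  have hchoose : (M.choose (M-2) : ℝ) * 2 = (M : ℝ) * ((M : ℝ) - 1) := by
    have h1 : M.choose (M - 2) = M.choose 2 := by
      have := Nat.choose_symm (show 2 ≤ M from hM)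
      simpa using this
    rw [h1, Nat.cast_choose_two]
    have : (1:ℝ) ≤ (M:ℝ) := by exact_mod_cast Nat.one_le_of_lt hM
    field_simp
  have hM' : (2:ℝ) ≤ (M:ℝ) := by exact_mod_cast hM
  have e1 : esymmA f univ (M-2) * esymmA f univ M * ((M:ℝ))^2 * 2
      = (M:ℝ)^2 * (esymmA f univ (M-1))^2 - (M:ℝ)^2 * ∑ i, (P i)^2 := by
    linear_combination (M:ℝ)^2 * key
  have e2 : (esymmA f univ (M-1))^2 * (M.choose (M-2) : ℝ) * 2
      = (M:ℝ)^2 * (esymmA f univ (M-1))^2 - (M:ℝ) * (esymmA f univ (M-1))^2 := by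
    linear_combination (esymmA f univ (M-1))^2 * hchoose
  have e3 : (M:ℝ) * (esymmA f univ (M-1))^2 ≤ (M:ℝ)^2 * ∑ i, (P i)^2 := by
    rw [hsig1]
    calc (M:ℝ) * (∑ i, P i)^2 ≤ (M:ℝ) * ((M : ℝ) * ∑ i, (P i)^2) :=
          mul_le_mul_of_nonneg_left hCS (by positivity)
    _ = (M:ℝ)^2 * ∑ i, (P i)^2 := by ring
  linarith

lemma esymm_map_neg (u : Multiset ℝ) (k : ℕ) :
    (u.map (fun x : ℝ => -x)).esymm k = (-1)^k * u.esymm k := by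
  rw [Multiset.esymm, Multiset.esymm, Multiset.powersetCard_map, Multiset.map_map]
  have h1 : ∀ t ∈ u.powersetCard k,
      (Multiset.prod ∘ Multiset.map fun x : ℝ => -x) t = (-1)^k * t.prod := by
    intro t ht
    have hc : Multiset.card t = k := (Multiset.mem_powersetCard.1 ht).2
    simp [Multiset.prod_map_neg, hc]
  rw [Multiset.map_congr rfl h1, ← Multiset.sum_map_mul_left]

lemma multiset_prod_X_sub_C_coeff (w : Multiset ℝ) {k : ℕ} (h : k ≤ Multiset.card w) :
    (w.map fun a => X - C a).prod.coeff k
      = (-1)^(Multiset.card w - k) * w.esymm (Multiset.card w - k) := by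
  have hconv : (w.map fun a => X - C a) = ((w.map (fun a : ℝ => -a)).map fun a => X + C a) := by
    rw [Multiset.map_map]
    apply Multiset.map_congr rfl
    intro a _
    simp [sub_eq_add_neg]
  rw [hconv, Multiset.prod_X_add_C_coeff _ (by rwa [Multiset.card_map]), Multiset.card_map,
    esymm_map_neg]

/-- Derivative step: from a multiset of reals produce one with one fewer element whose
elementary symmetric functions are scaled. -/
lemma deriv_step (u : Multiset ℝ) (hu : 1 ≤ Multiset.card u) :
    ∃ v : Multiset ℝ, Multiset.card v = Multiset.card u - 1 ∧
      ∀ j, j ≤ Multiset.card u - 1 →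
        (Multiset.card u : ℝ) * v.esymm j = ((Multiset.card u - j : ℕ) : ℝ) * u.esymm j := by
  classical
  set N := Multiset.card u with hN
  set p : ℝ[X] := (u.map fun a => X - C a).prod with hp
  have hmonic : p.Monic :=
    monic_multiset_prod_of_monic _ _ (fun a _ => monic_X_sub_C a)
  have hdeg : p.natDegree = N := by
    rw [hp, natDegree_multiset_prod_X_sub_C_eq_card]
  have hroots : p.roots = u := roots_multiset_prod_X_sub_C u
  have hcard1 : Multiset.card (derivative p).roots ≤ N - 1 := by
    calc Multiset.card (derivative p).roots ≤ (derivative p).natDegree := card_roots' _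
    _ ≤ N - 1 := by rw [← hdeg]; exact natDegree_derivative_le p
  have hge : N ≤ Multiset.card (derivative p).roots + 1 := by
    have h := Polynomial.card_roots_le_derivative p
    rwa [hroots] at h
  have hcard : Multiset.card (derivative p).roots = N - 1 := by omega
  have hNd : (derivative p).natDegree = N - 1 := by
    have h1 : N - 1 ≤ (derivative p).natDegree := by
      rw [← hcard]; exact card_roots' _
    have h2 := natDegree_derivative_le p
    rw [hdeg] at h2
    omega
  have hNne : (N:ℝ) ≠ 0 := by
    have : 0 < N := hu
    positivity
  have hlead : (derivative p).coeff (N-1) = (N : ℝ) := by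
    rw [coeff_derivative]
    have hn1 : N - 1 + 1 = N := by omega
    rw [hn1, ← hdeg, hmonic.coeff_natDegree, hdeg]
    norm_cast
    omega
  set q : ℝ[X] := C ((N : ℝ)⁻¹) * derivative p with hq
  have hqdeg : q.natDegree = N - 1 := by
    rw [hq, natDegree_C_mul (inv_ne_zero hNne), hNd]
  have hqmonic : q.Monic := by
    rw [Polynomial.Monic, Polynomial.leadingCoeff, hqdeg, hq, coeff_C_mul, hlead]
    field_simp
  have hqroots : q.roots = (derivative p).roots := roots_C_mul _ (inv_ne_zero hNne)
  set v := q.roots with hv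
  have hvcard : Multiset.card v = N - 1 := by
    show Multiset.card q.roots = N - 1
    rw [roots_C_mul _ (inv_ne_zero hNne)]
    exact hcard
  have hqprod : (v.map fun a => X - C a).prod = q :=
    prod_multiset_X_sub_C_of_monic_of_roots_card_eq hqmonic (by rw [hqdeg]; exact hvcard)
  refine ⟨v, hvcard, ?_⟩
  intro j hj
  -- coefficient of p at N - j
  have hcoeffp : p.coeff (N - j) = (-1)^j * u.esymm j := by
    have h1 : N - j ≤ Multiset.card u := by omega
    rw [hp, multiset_prod_X_sub_C_coeff u h1, ← hN]
    have : N - (N - j) = j := by omega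
    rw [this]
  have hcoeffq : q.coeff (N - 1 - j) = (-1)^j * v.esymm j := by
    have h1 : N - 1 - j ≤ Multiset.card v := by omega
    rw [← hqprod, multiset_prod_X_sub_C_coeff v h1, hvcard]
    have : N - 1 - (N - 1 - j) = j := by omega
    rw [this]
  have hder : q.coeff (N - 1 - j) = (N:ℝ)⁻¹ * (p.coeff (N - j) * ((N : ℝ) - j)) := by
    rw [hq, coeff_C_mul, coeff_derivative]
    have h2 : N - 1 - j + 1 = N - j := by omega
    rw [h2]
    congr 1
    congr 1
    have h3 : ((N - 1 - j : ℕ) : ℝ) = (N:ℝ) - 1 - j := by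
      have : j + 1 ≤ N := by omega
      push_cast [Nat.cast_sub (by omega : j ≤ N - 1), Nat.cast_sub (by omega : 1 ≤ N)]
      ring
    rw [h3]
    ring
  have hNj : ((N - j : ℕ) : ℝ) = (N : ℝ) - j := by
    push_cast [Nat.cast_sub (by omega : j ≤ N)]
    ring
  rw [hcoeffq, hcoeffp] at hder
  have hpow : ((-1:ℝ))^j ≠ 0 := by
    apply pow_ne_zero; norm_num
  field_simp at hder
  have h6 : v.esymm j * (N:ℝ) = u.esymm j * ((N:ℝ) - (j:ℝ)) :=
    mul_left_cancel₀ hpow (by linear_combination (-1:ℝ)^j * hder)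
  rw [hNj]
  linear_combination h6

lemma esymmA_eq_esymm (lam : Fin n → ℝ) (A : Finset (Fin n)) (k : ℕ) :
    esymmA lam A k = (A.val.map lam).esymm k :=
  (Finset.esymm_map_val lam A k).symm

lemma exists_fn (u : Multiset ℝ) (M : ℕ) (hM : Multiset.card u = M) :
    ∃ f : Fin M → ℝ, ((univ : Finset (Fin M)).val.map f) = u := by
  have hlen : u.toList.length = M := by rw [Multiset.length_toList, hM]
  refine ⟨fun i => u.toList.get (Fin.cast hlen.symm i), ?_⟩
  rw [Fin.univ_val_map]
  have h1 : List.ofFn (fun i : Fin M => u.toList.get (Fin.cast hlen.symm i))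
      = List.ofFn u.toList.get := (List.ofFn_congr hlen u.toList.get).symm
  rw [h1, List.ofFn_get, Multiset.coe_toList]

lemma choose_deriv (N' j : ℕ) :
    (N'+1) * N'.choose j = (N'+1).choose j * (N'+1 - j) := by
  rw [Nat.add_one_mul_choose_eq, Nat.choose_succ_right_eq]

/-- Newton's inequality for multisets of reals. -/
theorem newton_multiset (u : Multiset ℝ) (k : ℕ) (hk1 : 1 ≤ k)
    (hk2 : k + 1 ≤ Multiset.card u) :
    u.esymm (k-1) * u.esymm (k+1) * ((Multiset.card u).choose k : ℝ)^2
      ≤ (u.esymm k)^2 *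
        (((Multiset.card u).choose (k-1) : ℝ) * ((Multiset.card u).choose (k+1) : ℝ)) := by
  obtain ⟨d, hd⟩ : ∃ d, Multiset.card u = k + 1 + d := ⟨Multiset.card u - (k+1), by omega⟩
  clear hk2
  induction d generalizing u with
  | zero =>
    have hMcard : Multiset.card u = k + 1 := by omega
    obtain ⟨f, hf⟩ := exists_fn u (k+1) hMcard
    have hbridge : ∀ j, u.esymm j = esymmA f univ j := by
      intro j
      rw [esymmA_eq_esymm, hf]
    have htop := newton_top (k+1) (by omega) f
    have e1 : k + 1 - 2 = k - 1 := by omega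
    have e2 : k + 1 - 1 = k := by omega
    rw [e1, e2] at htop
    rw [hMcard, hbridge (k-1), hbridge k, hbridge (k+1)]
    have c1 : ((k+1).choose k : ℝ) = ((k+1 : ℕ) : ℝ) := by
      rw [Nat.choose_succ_self_right]
    have c2 : ((k+1).choose (k+1) : ℝ) = 1 := by
      rw [Nat.choose_self]; norm_num
    have c3 : ((k+1).choose (k-1) : ℝ) = ((k+1).choose (k+1-2) : ℝ) := by rw [e1]
    rw [c1, c2, c3]
    calc esymmA f univ (k-1) * esymmA f univ (k+1) * ((k+1 : ℕ) : ℝ)^2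
        ≤ (esymmA f univ k)^2 * (((k+1).choose (k+1-2) : ℝ)) := htop
      _ = (esymmA f univ k)^2 * (((k+1).choose (k+1-2) : ℝ) * 1) := by ring
  | succ d ih =>
    set N := Multiset.card u with hN
    have hNval : N = k + 2 + d := by omega
    obtain ⟨v, hvcard, hscale⟩ := deriv_step u (by omega)
    have hvc : Multiset.card v = k + 1 + d := by omega
    have hIH := ih v hvc
    set N' := Multiset.card v with hN'
    -- abbreviations
    set a1 := u.esymm (k-1); set a2 := u.esymm k; set a3 := u.esymm (k+1)
    set b1 := v.esymm (k-1); set b2 := v.esymm k; set b3 := v.esymm (k+1)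
    have hs1 : (N:ℝ) * b1 = ((N - (k-1) : ℕ) : ℝ) * a1 := hscale (k-1) (by omega)
    have hs2 : (N:ℝ) * b2 = ((N - k : ℕ) : ℝ) * a2 := hscale k (by omega)
    have hs3 : (N:ℝ) * b3 = ((N - (k+1) : ℕ) : ℝ) * a3 := hscale (k+1) (by omega)
    have hchoose : ∀ j, (N:ℝ) * (N'.choose j : ℝ) = (N.choose j : ℝ) * ((N - j : ℕ) : ℝ) := by
      intro j
      have hNsucc : N = N' + 1 := by omega
      have := choose_deriv N' j
      rw [← hNsucc] at this
      exact_mod_cast congrArg (fun x : ℕ => (x : ℝ)) this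
    set c1 : ℝ := ((N - (k-1) : ℕ) : ℝ) with hc1e
    set c2 : ℝ := ((N - k : ℕ) : ℝ) with hc2e
    set c3 : ℝ := ((N - (k+1) : ℕ) : ℝ) with hc3e
    have hc1 : 0 < c1 := by
      rw [hc1e]
      exact_mod_cast (by omega : 0 < N - (k-1))
    have hc2 : 0 < c2 := by
      rw [hc2e]
      exact_mod_cast (by omega : 0 < N - k)
    have hc3 : 0 < c3 := by
      rw [hc3e]
      exact_mod_cast (by omega : 0 < N - (k+1))
    have m1 : ((N:ℝ)*b1) * ((N:ℝ)*b3) * (((N:ℝ) * (N'.choose k : ℝ)))^2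
        ≤ ((N:ℝ)*b2)^2 * (((N:ℝ) * (N'.choose (k-1) : ℝ)) * ((N:ℝ) * (N'.choose (k+1) : ℝ))) := by
      have h4 : (0:ℝ) ≤ (N:ℝ)^4 := by positivity
      calc ((N:ℝ)*b1) * ((N:ℝ)*b3) * (((N:ℝ) * (N'.choose k : ℝ)))^2
          = (N:ℝ)^4 * (b1 * b3 * ((N'.choose k : ℝ))^2) := by ring
        _ ≤ (N:ℝ)^4 * (b2^2 * ((N'.choose (k-1) : ℝ) * (N'.choose (k+1) : ℝ))) :=
            mul_le_mul_of_nonneg_left hIH h4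
        _ = ((N:ℝ)*b2)^2 * (((N:ℝ) * (N'.choose (k-1) : ℝ)) * ((N:ℝ) * (N'.choose (k+1) : ℝ))) := by
            ring
    rw [hs1, hs3, hs2, hchoose k, hchoose (k-1), hchoose (k+1)] at m1
    -- m1 : (c1*a1)*(c3*a3)*((Ck*c2))^2 ≤ (c2*a2)^2*((C1*c1)*(C3*c3))
    have hD : (0:ℝ) < c1 * c3 * c2^2 := by positivity
    have final : (c1 * c3 * c2^2) * (a1 * a3 * ((N.choose k : ℝ))^2)
        ≤ (c1 * c3 * c2^2) * (a2^2 * ((N.choose (k-1) : ℝ) * (N.choose (k+1) : ℝ))) := by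
      calc (c1 * c3 * c2^2) * (a1 * a3 * ((N.choose k : ℝ))^2)
          = (c1*a1) * (c3*a3) * ((N.choose k : ℝ) * c2)^2 := by ring
        _ ≤ (c2*a2)^2 * (((N.choose (k-1) : ℝ) * c1) * ((N.choose (k+1) : ℝ) * c3)) := m1
        _ = (c1 * c3 * c2^2) * (a2^2 * ((N.choose (k-1) : ℝ) * (N.choose (k+1) : ℝ))) := by ring
    exact le_of_mul_le_mul_left final hD

lemma choose_log_concave {N k : ℕ} (hk : 1 ≤ k) (hkN : k + 1 ≤ N) :
    N.choose (k-1) * N.choose (k+1) ≤ N.choose k ^ 2 := by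
  have h1 : N.choose (k+1) * (k+1) = N.choose k * (N - k) := Nat.choose_succ_right_eq N k
  have h2 : N.choose k * k = N.choose (k-1) * (N - k + 1) := by
    have h := Nat.choose_succ_right_eq N (k-1)
    have hk' : k - 1 + 1 = k := by omega
    have hk'' : N - (k - 1) = N - k + 1 := by omega
    rw [hk', hk''] at h
    exact h
  have key : (N.choose (k-1) * N.choose (k+1)) * ((k+1)*(N-k+1))
      = (N.choose k ^ 2) * (k * (N-k)) := by
    calc (N.choose (k-1) * N.choose (k+1)) * ((k+1)*(N-k+1))
        = (N.choose (k-1) * (N-k+1)) * (N.choose (k+1) * (k+1)) := by ring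
      _ = (N.choose k * k) * (N.choose k * (N - k)) := by rw [← h2, h1]
      _ = (N.choose k ^ 2) * (k * (N-k)) := by ring
  have hle : k * (N-k) ≤ (k+1) * (N-k+1) :=
    Nat.mul_le_mul (by omega) (by omega)
  have : (N.choose (k-1) * N.choose (k+1)) * ((k+1)*(N-k+1))
      ≤ (N.choose k ^ 2) * ((k+1)*(N-k+1)) := by
    rw [key]
    exact Nat.mul_le_mul_left _ hle
  exact Nat.le_of_mul_le_mul_right this (by positivity)

lemma no_pattern (lam : Fin n → ℝ) (A : Finset (Fin n)) (k : ℕ) (hk1 : 1 ≤ k)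
    (hk2 : k + 1 ≤ A.card)
    (h1 : 0 < esymmA lam A (k-1)) (h3 : 0 < esymmA lam A (k+1))
    (hgt : esymmA lam A k ^ 2 < esymmA lam A (k-1) * esymmA lam A (k+1)) : False := by
  have hcard : Multiset.card (A.val.map lam) = A.card := by
    rw [Multiset.card_map]; rfl
  have hN := newton_multiset (A.val.map lam) k hk1 (by rw [hcard]; exact hk2)
  rw [hcard, ← esymmA_eq_esymm, ← esymmA_eq_esymm, ← esymmA_eq_esymm] at hN
  have hlc : (A.card.choose (k-1) : ℝ) * (A.card.choose (k+1) : ℝ) ≤ (A.card.choose k : ℝ)^2 := by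
    exact_mod_cast choose_log_concave hk1 hk2
  have hCk : (0:ℝ) < (A.card.choose k : ℝ) := by
    exact_mod_cast Nat.choose_pos (by omega : k ≤ A.card)
  have hCC : (0:ℝ) ≤ (A.card.choose (k-1) : ℝ) * (A.card.choose (k+1) : ℝ) := by positivity
  have s1 : esymmA lam A k ^ 2 * ((A.card.choose (k-1) : ℝ) * (A.card.choose (k+1) : ℝ))
      ≤ esymmA lam A k ^ 2 * ((A.card.choose k : ℝ))^2 :=
    mul_le_mul_of_nonneg_left hlc (sq_nonneg _)
  have s2 : esymmA lam A k ^ 2 * ((A.card.choose k : ℝ))^2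
      < esymmA lam A (k-1) * esymmA lam A (k+1) * ((A.card.choose k : ℝ))^2 := by
    apply mul_lt_mul_of_pos_right hgt
    positivity
  linarith [hN, s1, s2]

/-- Γ_m positivity of the first minors. -/
lemma F_pos : ∀ m : ℕ, 1 ≤ m → ∀ (lam : Fin n → ℝ) (A : Finset (Fin n)),
    (∀ k, 1 ≤ k → k ≤ m → 0 < esymmA lam A k) →
    ∀ i ∈ A, 0 < esymmA lam (A.erase i) (m-1) := by
  intro m
  induction m with
  | zero => omega
  | succ m ih =>
    intro _ lam A hΓ i hi
    rcases Nat.eq_zero_or_pos m with rfl | hm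
    · simp [esymmA_zero lam (A.erase i)]
    have hgoalidx : m + 1 - 1 = m := by omega
    rw [hgoalidx]
    rcases lt_trichotomy A.card (m+1) with hlt | heq | hgt
    · exfalso
      have := hΓ (m+1) (by omega) le_rfl
      rw [esymmA_of_card_lt lam hlt] at this
      exact lt_irrefl _ this
    · -- all entries positive
      have hall : ∀ j ∈ A, 0 < lam j :=
        all_pos_of_gamma_card lam (fun k hk1 hk2 => hΓ k hk1 (by omega))
      have hce : (A.erase i).card = m := by
        rw [Finset.card_erase_of_mem hi, heq]; omega
      have hne : ((A.erase i).powersetCard m).Nonempty :=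
        Finset.powersetCard_nonempty_of_le (by rw [hce])
      rw [esymmA]
      refine Finset.sum_pos (fun s hs => ?_) hne
      rw [mem_powersetCard] at hs
      exact Finset.prod_pos fun j hj =>
        hall j (Finset.mem_of_mem_erase (hs.1 hj))
    · -- main case
      by_contra hneg
      push_neg at hneg
      have hIH : 0 < esymmA lam (A.erase i) (m-1) := by
        have := ih hm lam A (fun k hk1 hk2 => hΓ k hk1 (by omega)) i hi
        exact this
      set a := esymmA lam (A.erase i) (m-1) with ha
      set x := -esymmA lam (A.erase i) m with hx
      have hx0 : 0 ≤ x := by rw [hx]; linarith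
      have hI1m : 0 < esymmA lam (A.erase i) m + lam i * a := by
        have h := esymmA_erase lam hi (m-1)
        have hmm : m - 1 + 1 = m := by omega
        rw [hmm] at h
        have := hΓ m (by omega) (by omega)
        rw [h] at this
        exact this
      have hlam : lam i * a > x := by
        rw [hx]; linarith
      have hlampos : 0 < lam i := by
        rcases le_or_gt (lam i) 0 with h | h
        · exfalso
          have : lam i * a ≤ 0 := mul_nonpos_of_nonpos_of_nonneg h hIH.le
          linarith
        · exact h
      have hI1m1 : 0 < esymmA lam (A.erase i) (m+1) + lam i * (-x) := by
        have h := esymmA_erase lam hi m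
        have := hΓ (m+1) (by omega) le_rfl
        rw [h] at this
        rw [hx]
        ring_nf
        ring_nf at this
        linarith
      have h3 : 0 < esymmA lam (A.erase i) (m+1) := by
        nlinarith [mul_nonneg hlampos.le hx0]
      have hgt : esymmA lam (A.erase i) m ^ 2
          < esymmA lam (A.erase i) (m-1) * esymmA lam (A.erase i) (m+1) := by
        have hsq : esymmA lam (A.erase i) m ^ 2 = x^2 := by rw [hx]; ring
        rw [hsq, ← ha]
        rcases eq_or_lt_of_le hx0 with heq0 | hxpos
        · rw [← heq0]
          simpa using mul_pos hIH h3
        · have e1 : a * esymmA lam (A.erase i) (m+1) > a * (lam i * x) :=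
            mul_lt_mul_of_pos_left (by nlinarith) hIH
          nlinarith
      have hk2 : m + 1 ≤ (A.erase i).card := by
        rw [Finset.card_erase_of_mem hi]; omega
      have hk1m : 1 ≤ m := hm
      have := no_pattern lam (A.erase i) m hk1m hk2 (by rw [← ha]; exact hIH) h3 hgt
      exact this

lemma esymmA_one (lam : Fin n → ℝ) (A : Finset (Fin n)) :
    esymmA lam A 1 = ∑ i ∈ A, lam i := by
  have h := sum_lam_esymmA_erase lam A 0
  simp only [esymmA_zero, mul_one] at h
  norm_num at h
  exact h.symm

/-- Chou–Wang / Hou–Ma–Wu: for a decreasing vector `Λ ∈ Γ_m`,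
`σ_{m-1}(Λ|1) ≥ (m / (n Λ₁)) σ_m(Λ)`. -/
theorem sigma_remove_lower_bound (n m : ℕ) (hn : 1 ≤ n) (hm : 1 ≤ m) (hmn : m ≤ n)
    (Λ : Fin n → ℝ) (hdec : ∀ i j : Fin n, i ≤ j → Λ j ≤ Λ i)
    (hGamma : ∀ k, 1 ≤ k → k ≤ m → 0 < esymmR n k Λ) :
    esymmRemove n (m - 1) ⟨0, hn⟩ Λ ≥
      (m : ℝ) / (n * Λ ⟨0, hn⟩) * esymmR n m Λ := by
  classical
  set i0 : Fin n := ⟨0, hn⟩ with hi0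
  set B := (univ : Finset (Fin n)).erase i0 with hB
  have hgam : ∀ k, 1 ≤ k → k ≤ m → 0 < esymmA Λ univ k := hGamma
  have hmax : ∀ i, Λ i ≤ Λ i0 := by
    intro i
    refine hdec i0 i ?_
    rw [Fin.le_def]
    exact Nat.zero_le _
  have hcardu : (univ : Finset (Fin n)).card = n := by simp
  have hL1 : 0 < Λ i0 := by
    have h1 : 0 < esymmA Λ univ 1 := hgam 1 le_rfl hm
    rw [esymmA_one] at h1
    have h2 : ∑ i, Λ i ≤ (n : ℝ) * Λ i0 := by
      calc ∑ i, Λ i ≤ ∑ _i : Fin n, Λ i0 := Finset.sum_le_sum fun i _ => hmax i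
        _ = (n : ℝ) * Λ i0 := by rw [Finset.sum_const, hcardu, nsmul_eq_mul]
    by_contra hneg
    push_neg at hneg
    have : (n:ℝ) * Λ i0 ≤ 0 :=
      mul_nonpos_iff.2 (Or.inl ⟨by positivity, hneg⟩)
    linarith
  have hBcard : B.card = n - 1 := by
    rw [hB, Finset.card_erase_of_mem (mem_univ i0), hcardu]
  have hsplit : esymmA Λ univ m = esymmA Λ B m + Λ i0 * esymmA Λ B (m-1) := by
    have h := esymmA_erase Λ (mem_univ i0) (m-1)
    have hmm : m - 1 + 1 = m := by omega
    rw [hmm] at h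
    exact h
  have hBm1pos : 0 < esymmA Λ B (m-1) :=
    F_pos m hm Λ univ hgam i0 (mem_univ i0)
  have hΛE : 0 ≤ Λ i0 * esymmA Λ B (m-1) := mul_nonneg hL1.le hBm1pos.le
  have hm' : (m:ℝ) ≤ (n:ℝ) := by exact_mod_cast hmn
  have hm0 : (0:ℝ) ≤ (m:ℝ) := by positivity
  have hkey : (m:ℝ) * esymmA Λ univ m ≤ (n:ℝ) * Λ i0 * esymmA Λ B (m-1) := by
    rcases le_or_gt (esymmA Λ B m) 0 with hc | hc
    · calc (m:ℝ) * esymmA Λ univ m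
          = (m:ℝ) * esymmA Λ B m + (m:ℝ) * (Λ i0 * esymmA Λ B (m-1)) := by
            rw [hsplit]; ring
        _ ≤ (m:ℝ) * (Λ i0 * esymmA Λ B (m-1)) := by nlinarith
        _ ≤ (n:ℝ) * (Λ i0 * esymmA Λ B (m-1)) := mul_le_mul_of_nonneg_right hm' hΛE
        _ = (n:ℝ) * Λ i0 * esymmA Λ B (m-1) := by ring
    · have hnm : m + 1 ≤ n := by
        by_contra hle
        push_neg at hle
        have hlt : B.card < m := by omega
        have h0 : esymmA Λ B m = 0 := esymmA_of_card_lt Λ hlt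
        linarith
      have hBgam : ∀ k, 1 ≤ k → k ≤ m → 0 < esymmA Λ B k := by
        intro k hk1 hk2
        rcases eq_or_lt_of_le hk2 with rfl | hlt
        · exact hc
        · have h := F_pos (k+1) (by omega) Λ univ
            (fun j hj1 hj2 => hgam j hj1 (by omega)) i0 (mem_univ i0)
          simpa using h
      have hFm : ∀ j ∈ B, 0 < esymmA Λ (B.erase j) (m-1) :=
        F_pos m hm Λ B hBgam
      have hI2 : ∑ j ∈ B, Λ j * esymmA Λ (B.erase j) (m-1) = (m:ℝ) * esymmA Λ B m := by
        have h := sum_lam_esymmA_erase Λ B (m-1)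
        have hmm : m - 1 + 1 = m := by omega
        rw [hmm] at h
        exact h
      have hI3 : ∑ j ∈ B, esymmA Λ (B.erase j) (m-1)
          = ((n - m : ℕ) : ℝ) * esymmA Λ B (m-1) := by
        have h := sum_esymmA_erase Λ B (m-1)
        have he : B.card - (m-1) = n - m := by omega
        rw [he] at h
        exact h
      have hterm : ∀ j ∈ B, Λ j * esymmA Λ (B.erase j) (m-1)
          ≤ Λ i0 * esymmA Λ (B.erase j) (m-1) := fun j hj =>
        mul_le_mul_of_nonneg_right (hmax j) (hFm j hj).le
      have hnm' : ((n - m : ℕ) : ℝ) = (n:ℝ) - (m:ℝ) := by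
        push_cast [Nat.cast_sub hmn]
        ring
      have hmEB : (m:ℝ) * esymmA Λ B m ≤ ((n:ℝ) - (m:ℝ)) * (Λ i0 * esymmA Λ B (m-1)) := by
        rw [← hI2]
        calc ∑ j ∈ B, Λ j * esymmA Λ (B.erase j) (m-1)
            ≤ ∑ j ∈ B, Λ i0 * esymmA Λ (B.erase j) (m-1) := Finset.sum_le_sum hterm
          _ = Λ i0 * ∑ j ∈ B, esymmA Λ (B.erase j) (m-1) := by rw [Finset.mul_sum]
          _ = Λ i0 * (((n - m : ℕ) : ℝ) * esymmA Λ B (m-1)) := by rw [hI3]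
          _ = ((n:ℝ) - (m:ℝ)) * (Λ i0 * esymmA Λ B (m-1)) := by rw [hnm']; ring
      calc (m:ℝ) * esymmA Λ univ m
          = (m:ℝ) * (Λ i0 * esymmA Λ B (m-1)) + (m:ℝ) * esymmA Λ B m := by
            rw [hsplit]; ring
        _ ≤ (m:ℝ) * (Λ i0 * esymmA Λ B (m-1))
              + ((n:ℝ) - (m:ℝ)) * (Λ i0 * esymmA Λ B (m-1)) := by linarith
        _ = (n:ℝ) * Λ i0 * esymmA Λ B (m-1) := by ring
  have hnΛ : 0 < (n:ℝ) * Λ i0 := by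
    have hn' : (0:ℝ) < (n:ℝ) := by exact_mod_cast hn
    exact mul_pos hn' hL1
  have hrem : esymmRemove n (m-1) i0 Λ = esymmA Λ B (m-1) := rfl
  have hesR : esymmR n m Λ = esymmA Λ univ m := rfl
  rw [ge_iff_le, hrem, hesR, div_mul_eq_mul_div, div_le_iff₀ hnΛ]
  linarith [hkey]
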